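/- Let W be the potential vector field of a second Ricci soliton (M, g, W, λ) on an oriented closed Riemannian manifold of dimension n. If ∫_M ‖𝓛_W 𝓛_W g‖² dΩ_g ≤ ∫_M (nλ² − 2λR) dΩ_g, then (M, g) is Ricci flat, i.e. Ric = 0. -/

import Mathlib

/-!
STATEMENT 4. Let `W` be the potential vector field of a second Ricci soliton
`(M, g, W, λ)` (`𝓛_W 𝓛_W g + Ric = λ g`) on an oriented closed Riemannian
manifold of dimension `n`.  If
`∫_M ‖𝓛_W 𝓛_W g‖² dΩ_g ≤ ∫_M (n λ² − 2 λ R) dΩ_g`,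
then `(M, g)` is Ricci flat, i.e. `Ric = 0`.

Tensor fields are modelled as maps assigning to each point a bilinear form on
the tangent space.  The pointwise Hilbert–Schmidt inner product `⟨·,·⟩` on
2-tensor fields induced by `g` is introduced as data, constrained by the
identities it satisfies (`ℝ`-bilinearity, symmetry, positive definiteness,
`⟨g, g⟩ = n`, `⟨g, Ric⟩ = R`); `‖T‖² = ⟨T, T⟩`.
-/

open Manifold MeasureTheory

noncomputable section

theorem second_ricci_soliton_integral_inequality_implies_ricci_flat
    {E : Type*} [NormedAddCommGroup E] [NormedSpace ℝ E] [FiniteDimensional ℝ E]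
    {H : Type*} [TopologicalSpace H] {I : ModelWithCorners ℝ E H}
    {M : Type*} [TopologicalSpace M] [ChartedSpace H M]
    [IsManifold I (⊤ : ℕ∞) M]
    -- `M` is closed: compact (without boundary)
    [CompactSpace M] [MeasurableSpace M] [BorelSpace M]
    -- the Riemannian volume measure `Ω_g` (M is oriented)
    (μ : Measure M) [IsFiniteMeasure μ] [μ.IsOpenPosMeasure]
    -- `n` is the dimension of the manifold
    (n : ℕ) (hn : Module.finrank ℝ E = n)
    -- the metric `g`, the Ricci curvature `Ric` of `g`, and the tensor `LL = 𝓛_W 𝓛_W g`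
    (g Ric LL : ∀ x : M, TangentSpace I x → TangentSpace I x → ℝ)
    -- the potential vector field `W`
    (W : ∀ x : M, TangentSpace I x)
    -- the scalar curvature `R` of `g`
    (R : M → ℝ)
    (lambda : ℝ)
    -- the pointwise Hilbert–Schmidt inner product on 2-tensor fields induced by `g`
    (inner2 : (∀ x : M, TangentSpace I x → TangentSpace I x → ℝ) →
      (∀ x : M, TangentSpace I x → TangentSpace I x → ℝ) → M → ℝ)
    (hsymm : ∀ T S, inner2 T S = inner2 S T)
    (hadd_left : ∀ T S U, inner2 (T + S) U = inner2 T U + inner2 S U)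
    (hsmul_left : ∀ (c : ℝ) T U, inner2 (c • T) U = c • inner2 T U)
    -- positive definiteness of the Hilbert–Schmidt inner product
    (hpos : ∀ T (x : M), 0 ≤ inner2 T T x)
    (hdef : ∀ x : M, inner2 Ric Ric x = 0 ↔ Ric x = 0)
    (hcont : Continuous (inner2 Ric Ric))
    -- `⟨g, g⟩ = ‖Id‖² = n` and `⟨g, Ric⟩ = R`
    (h_gg : inner2 g g = fun _ => (n : ℝ))
    (h_gRic : inner2 g Ric = R)
    -- integrability of the relevant functions on the closed manifold
    (hint_LL : Integrable (inner2 LL LL) μ)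
    (hint_Ric : Integrable (inner2 Ric Ric) μ)
    (hint_R : Integrable R μ)
    -- second Ricci soliton equation: `𝓛_W 𝓛_W g + Ric = λ g`
    (hsoliton : LL + Ric = lambda • g)
    -- the integral inequality `∫ ‖𝓛_W 𝓛_W g‖² ≤ ∫ (n λ² − 2 λ R)`
    (hineq : ∫ x, inner2 LL LL x ∂μ ≤
      ∫ x, ((n : ℝ) * lambda ^ 2 - 2 * lambda * R x) ∂μ) :
    ∀ x : M, Ric x = 0 := by

  -- pointwise expansion of ‖LL‖²
  have hLL : LL = lambda • g + (-1 : ℝ) • Ric := by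
    have := eq_sub_of_add_eq hsoliton
    rw [this, sub_eq_add_neg, neg_one_smul]
  have hadd_right : ∀ T S U, inner2 U (T + S) = inner2 U T + inner2 U S := by
    intro T S U; rw [hsymm, hadd_left, hsymm T U, hsymm S U]
  have hsmul_right : ∀ (c : ℝ) T U, inner2 U (c • T) = c • inner2 U T := by
    intro c T U; rw [hsymm, hsmul_left, hsymm]
  have hexp : ∀ x, inner2 LL LL x
      = (n : ℝ) * lambda ^ 2 - 2 * lambda * R x + inner2 Ric Ric x := by
    intro x
    have : inner2 LL LL = lambda • (lambda • inner2 g g + (-1 : ℝ) • inner2 g Ric)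
        + (-1 : ℝ) • (lambda • inner2 Ric g + (-1 : ℝ) • inner2 Ric Ric) := by
      rw [hLL, hadd_left, hsmul_left, hsmul_left, hadd_right, hadd_right,
        hsmul_right, hsmul_right, hsmul_right, hsmul_right]
    have h2 := congrFun this x
    simp only [Pi.add_apply, Pi.smul_apply, smul_eq_mul] at h2
    rw [h2, congrFun h_gg x, congrFun h_gRic x, hsymm Ric g, congrFun h_gRic x]
    ring
  -- integral of ⟨Ric,Ric⟩ is ≤ 0
  have hint_comb : Integrable (fun x => (n : ℝ) * lambda ^ 2 - 2 * lambda * R x) μ :=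
    (integrable_const _).sub (hint_R.const_mul _)
  have hsum : ∫ x, inner2 LL LL x ∂μ
      = (∫ x, ((n : ℝ) * lambda ^ 2 - 2 * lambda * R x) ∂μ) + ∫ x, inner2 Ric Ric x ∂μ := by
    rw [← integral_add hint_comb hint_Ric]
    exact integral_congr_ae (Filter.Eventually.of_forall fun x => hexp x)
  have hle : ∫ x, inner2 Ric Ric x ∂μ ≤ 0 := by linarith [hineq, hsum.symm.le, hsum.le]
  have hge : 0 ≤ ∫ x, inner2 Ric Ric x ∂μ :=
    integral_nonneg (hpos Ric)
  have hzero : ∫ x, inner2 Ric Ric x ∂μ = 0 := le_antisymm hle hge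
  have hae : inner2 Ric Ric =ᵐ[μ] 0 :=
    (integral_eq_zero_iff_of_nonneg (hpos Ric) hint_Ric).mp hzero
  have heq : inner2 Ric Ric = 0 := (hcont.ae_eq_iff_eq μ continuous_const).mp hae
  intro x
  exact (hdef x).mp (congrFun heq x)
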